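/- Let E be a vector lattice with the principal projection property, F a Dedekind complete vector lattice, Φ : 𝔅(E) → 𝔅(F) a Boolean homomorphism, D ⊆ E a lateral ideal, and T : D → F a positive map, orthogonally additive on D, and atomic on D (T(π x) = Φ(π)(T x) for every π ∈ 𝔅(E) and x ∈ D; note π x ∈ D since π x ⊑ x). Assume that for every x ∈ E the set {T y : y ∈ 𝓕_x ∩ D} is bounded above in F, and define the minimal extension T̃ : E → F by T̃ x = sup {T y : y ∈ 𝓕_x ∩ D} (with sup ∅ = 0). Then T̃ is atomic subordinate to Φ: T̃(π x) = Φ(π)(T̃ x) for every order projection π ∈ 𝔅(E) and every x ∈ E. -/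
import Mathlib


namespace VL

/-- Two elements of a vector lattice are disjoint if `|x| ⊓ |y| = 0`. -/
def VDisjoint {G : Type*} [Lattice G] [AddCommGroup G] (x y : G) : Prop :=
  |x| ⊓ |y| = 0

/-- `y` is a fragment of `x` if `y ⊥ (x - y)`. -/
def Fragment {G : Type*} [Lattice G] [AddCommGroup G] (y x : G) : Prop :=
  VDisjoint y (x - y)

/-- An order projection: a linear idempotent `π` with `0 ≤ π x ≤ x` for all `x ≥ 0`. -/
def IsOrderProjection {G : Type*} [Lattice G] [AddCommGroup G] [Module ℝ G]
    (π : G →ₗ[ℝ] G) : Prop :=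
  (∀ x, π (π x) = π x) ∧ ∀ x : G, 0 ≤ x → 0 ≤ π x ∧ π x ≤ x

/-- A map between the order projections of `E` and of `F` is a Boolean homomorphism if it
maps order projections to order projections and preserves the Boolean operations
`π ∧ ρ = π ∘ ρ`, `π ∨ ρ = π + ρ - π ∘ ρ` and `compl π = Id - π`. -/
def IsBooleanHom {E F : Type*} [Lattice E] [AddCommGroup E] [Module ℝ E]
    [Lattice F] [AddCommGroup F] [Module ℝ F]
    (Φ : (E →ₗ[ℝ] E) → (F →ₗ[ℝ] F)) : Prop :=
  (∀ π, IsOrderProjection π → IsOrderProjection (Φ π)) ∧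
  (∀ π ρ, IsOrderProjection π → IsOrderProjection ρ →
    Φ (π ∘ₗ ρ) = Φ π ∘ₗ Φ ρ) ∧
  (∀ π ρ, IsOrderProjection π → IsOrderProjection ρ →
    Φ (π + ρ - π ∘ₗ ρ) = Φ π + Φ ρ - Φ π ∘ₗ Φ ρ) ∧
  (∀ π, IsOrderProjection π → Φ (LinearMap.id - π) = LinearMap.id - Φ π)

/-- `T` is atomic subordinate to `Φ` if `T (π x) = Φ(π) (T x)` for every order projection. -/
def IsAtomic {E F : Type*} [Lattice E] [AddCommGroup E] [Module ℝ E]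
    [Lattice F] [AddCommGroup F] [Module ℝ F]
    (Φ : (E →ₗ[ℝ] E) → (F →ₗ[ℝ] F)) (T : E → F) : Prop :=
  ∀ π : E →ₗ[ℝ] E, IsOrderProjection π → ∀ x : E, T (π x) = Φ π (T x)

/-- The principal projection property: for every `x` there is an order projection `π_x`
(the projection onto the band generated by `x`) such that `z - π_x z ⊥ x` for all `z`,
and `π_x z ⊥ w` whenever `w ⊥ x`. -/
def HasPPP (E : Type*) [Lattice E] [AddCommGroup E] [Module ℝ E] : Prop :=
  ∀ x : E, ∃ π : E →ₗ[ℝ] E, IsOrderProjection π ∧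
    (∀ z : E, VDisjoint (z - π z) x) ∧
    (∀ z w : E, VDisjoint w x → VDisjoint (π z) w)

/-- Dedekind completeness: every nonempty set bounded above has a supremum. -/
def DedekindComplete (F : Type*) [Lattice F] : Prop :=
  ∀ S : Set F, S.Nonempty → BddAbove S → ∃ b, IsLUB S b


variable {E F : Type*}
  [Lattice E] [AddCommGroup E] [Module ℝ E]
  [CovariantClass E E (· + ·) (· ≤ ·)] [PosSMulMono ℝ E]
  [Lattice F] [AddCommGroup F] [Module ℝ F]
  [CovariantClass F F (· + ·) (· ≤ ·)] [PosSMulMono ℝ F]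


section Aux
variable {G : Type*} [Lattice G] [AddCommGroup G] [Module ℝ G]
  [CovariantClass G G (· + ·) (· ≤ ·)]

lemma IsOrderProjection.mono {π : G →ₗ[ℝ] G} (hπ : IsOrderProjection π) :
    Monotone π := fun x y h => by
  have := (hπ.2 (y - x) (by simpa using h)).1
  rw [map_sub, sub_nonneg] at this
  exact this

lemma IsOrderProjection.abs_map_le {π : G →ₗ[ℝ] G} (hπ : IsOrderProjection π)
    (z : G) : |π z| ≤ π |z| := by
  rw [_root_.abs_le']
  refine ⟨hπ.mono (le_abs_self z), ?_⟩
  have hz : -|z| ≤ z := by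
    have := le_abs_self (-z)
    rw [abs_neg] at this
    exact neg_le.1 this
  have := hπ.mono hz
  rw [map_neg] at this
  exact neg_le.1 this

lemma IsOrderProjection.compl {π : G →ₗ[ℝ] G} (hπ : IsOrderProjection π) :
    IsOrderProjection (LinearMap.id - π) := by
  refine ⟨fun x => ?_, fun x hx => ⟨?_, ?_⟩⟩
  · simp only [LinearMap.sub_apply, LinearMap.id_apply, map_sub, hπ.1]
    abel
  · simpa [LinearMap.sub_apply, sub_nonneg] using (hπ.2 x hx).2
  · simpa [LinearMap.sub_apply, sub_le_self_iff] using (hπ.2 x hx).1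

/-- `π z` is disjoint from `w - π w`, for any `z w`. -/
lemma IsOrderProjection.disj_compl {π : G →ₗ[ℝ] G} (hπ : IsOrderProjection π)
    (z w : G) : VDisjoint (π z) (w - π w) := by
  have hσ := hπ.compl
  set c := |π z| ⊓ |w - π w| with hcdef
  have hc0 : 0 ≤ c := le_inf (abs_nonneg _) (abs_nonneg _)
  have h1 : c ≤ π |z| := inf_le_left.trans (hπ.abs_map_le z)
  have h2 : c ≤ |w| - π |w| := by
    have := hσ.abs_map_le w
    simp only [LinearMap.sub_apply, LinearMap.id_apply] at this
    exact inf_le_right.trans this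
  have hπc : π c = 0 := by
    refine le_antisymm ?_ (hπ.2 c hc0).1
    have := hπ.mono h2
    simpa [map_sub, hπ.1] using this
  have hσc : c - π c ≤ 0 := by
    have := hσ.mono h1
    simpa [LinearMap.sub_apply, map_sub, hπ.1] using this
  have hcπ : c ≤ π c := by simpa [sub_nonpos] using hσc
  have : c ≤ 0 := hcπ.trans_eq hπc
  exact le_antisymm this hc0

/-- Order projections preserve disjointness. -/
lemma IsOrderProjection.disj_map {π : G →ₗ[ℝ] G} (hπ : IsOrderProjection π)
    {u v : G} (h : VDisjoint u v) : VDisjoint (π u) (π v) := by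
  have hc0 : (0 : G) ≤ |π u| ⊓ |π v| := le_inf (abs_nonneg _) (abs_nonneg _)
  have h1 : |π u| ⊓ |π v| ≤ |u| :=
    inf_le_left.trans ((hπ.abs_map_le u).trans (hπ.2 |u| (abs_nonneg u)).2)
  have h2 : |π u| ⊓ |π v| ≤ |v| :=
    inf_le_right.trans ((hπ.abs_map_le v).trans (hπ.2 |v| (abs_nonneg v)).2)
  have : |π u| ⊓ |π v| ≤ 0 := (le_inf h1 h2).trans_eq h
  exact le_antisymm this hc0

lemma inf_eq_zero_of_add {a b c : G} (ha : 0 ≤ a) (hb : 0 ≤ b) (hc : 0 ≤ c)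
    (hab : a ⊓ b = 0) (hac : a ⊓ c = 0) : a ⊓ (b + c) = 0 := by
  set d := a ⊓ (b + c) with hddef
  have hd0 : 0 ≤ d := le_inf ha (add_nonneg hb hc)
  have hda : d ≤ a := inf_le_left
  have hdbc : d ≤ b + c := inf_le_right
  have key : d - a ⊓ b ≤ a ⊓ c := by
    rw [sub_inf]
    refine sup_le (le_inf ?_ ?_) (le_inf ?_ ?_)
    · exact (sub_nonpos.2 hda).trans ha
    · exact (sub_nonpos.2 hda).trans hc
    · exact (sub_le_self d hb).trans hda
    · exact sub_le_iff_le_add'.2 hdbc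
  rw [hab, sub_zero, hac] at key
  exact le_antisymm key hd0

/-- Fragments map to fragments under an order projection. -/
lemma IsOrderProjection.frag_map {π : G →ₗ[ℝ] G} (hπ : IsOrderProjection π)
    {y x : G} (h : Fragment y x) : Fragment (π y) (π x) := by
  have := hπ.disj_map h
  rw [map_sub] at this
  exact this

/-- `π y` is a fragment of `y`. -/
lemma IsOrderProjection.frag_self {π : G →ₗ[ℝ] G} (hπ : IsOrderProjection π)
    (y : G) : Fragment (π y) y := by
  have := hπ.disj_compl y y
  rwa [Fragment]

/-- A fragment of `π x` is fixed by `π`. -/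
lemma IsOrderProjection.frag_fixed {π : G →ₗ[ℝ] G} (hπ : IsOrderProjection π)
    {z x : G} (h : Fragment z (π x)) : π z = z := by
  have hσ := hπ.compl
  have key : |z - π z| = 0 := by
    refine le_antisymm ?_ (abs_nonneg _)
    have h1 : |z - π z| ≤ |z| := by
      have := hσ.abs_map_le z
      simp only [LinearMap.sub_apply, LinearMap.id_apply] at this
      exact this.trans (hσ.2 |z| (abs_nonneg z)).2
    have heq : z - π z = -((π x - z) - π (π x - z)) := by
      simp only [map_sub, hπ.1]
      abel
    have h2 : |z - π z| ≤ |π x - z| := by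
      rw [heq, abs_neg]
      have := hσ.abs_map_le (π x - z)
      simp only [LinearMap.sub_apply, LinearMap.id_apply] at this
      exact this.trans (hσ.2 |π x - z| (abs_nonneg _)).2
    calc |z - π z| ≤ |z| ⊓ |π x - z| := le_inf h1 h2
    _ = 0 := h
  have h1 : z - π z ≤ 0 := (le_abs_self _).trans key.le
  have h2 : 0 ≤ z - π z := by
    have := le_abs_self (-(z - π z))
    rw [abs_neg, key] at this
    simpa using this
  have : z - π z = 0 := le_antisymm h1 h2
  rw [sub_eq_zero] at this
  exact this.symm

/-- A fragment of `π x` is a fragment of `x`. -/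
lemma IsOrderProjection.frag_of_frag_proj {π : G →ₗ[ℝ] G} (hπ : IsOrderProjection π)
    {z x : G} (h : Fragment z (π x)) : Fragment z x := by
  have hz : π z = z := hπ.frag_fixed h
  have hd1 : |z| ⊓ |x - π x| = 0 := by
    have := hπ.disj_compl z x
    rwa [VDisjoint, hz] at this
  have hd2 : |z| ⊓ |π x - z| = 0 := h
  have hsum : |z| ⊓ (|x - π x| + |π x - z|) = 0 :=
    inf_eq_zero_of_add (abs_nonneg _) (abs_nonneg _) (abs_nonneg _) hd1 hd2
  have habs : |x - z| ≤ |x - π x| + |π x - z| := by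
    have := abs_add_le (x - π x) (π x - z)
    rwa [show x - π x + (π x - z) = x - z by abel] at this
  refine le_antisymm ?_ (le_inf (abs_nonneg _) (abs_nonneg _))
  calc |z| ⊓ |x - z| ≤ |z| ⊓ (|x - π x| + |π x - z|) := inf_le_inf_left _ habs
  _ = 0 := hsum

end Aux

/-- A lateral ideal: closed under fragments and under sums of disjoint elements. -/

def IsLateralIdeal {G : Type*} [Lattice G] [AddCommGroup G] (D : Set G) : Prop :=
  (∀ x ∈ D, ∀ y : G, Fragment y x → y ∈ D) ∧
  ∀ x ∈ D, ∀ y ∈ D, VDisjoint x y → x + y ∈ D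

/-- the minimal extension `T̃ x = sup {T y : y ∈ 𝓕ₓ ∩ D}` (with
`sup ∅ = 0`) of a positive, orthogonally additive, atomic map on a lateral ideal `D` is
atomic subordinate to `Φ`. -/
theorem minimal_extension_atomic
    (hE : HasPPP E) (hF : DedekindComplete F)
    (Φ : (E →ₗ[ℝ] E) → (F →ₗ[ℝ] F)) (hΦ : IsBooleanHom Φ)
    (D : Set E) (hD : IsLateralIdeal D) (T : E → F)
    (hTpos : ∀ x ∈ D, 0 ≤ T x)
    (hToa : ∀ x ∈ D, ∀ y ∈ D, VDisjoint x y → T (x + y) = T x + T y)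
    (hTatomic : ∀ π : E →ₗ[ℝ] E, IsOrderProjection π → ∀ x ∈ D, T (π x) = Φ π (T x))
    (Text : E → F)
    (hText : ∀ x : E,
      IsLUB (insert (0 : F) {w : F | ∃ y : E, Fragment y x ∧ y ∈ D ∧ w = T y}) (Text x)) :
    ∀ π : E →ₗ[ℝ] E, IsOrderProjection π → ∀ x : E, Text (π x) = Φ π (Text x) := by
  intro π hπ x
  set ρ := Φ π with hρdef
  have hρ : IsOrderProjection ρ := hΦ.1 π hπ
  have hσρ := hρ.compl
  have hx := hText x
  have hπx := hText (π x)
  have hTx0 : 0 ≤ Text x := hx.1 (Set.mem_insert _ _)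
  refine hπx.unique ?_
  constructor
  · rintro w (rfl | ⟨z, hzfrag, hzD, rfl⟩)
    · exact (hρ.2 _ hTx0).1
    · have hzfix : π z = z := hπ.frag_fixed hzfrag
      have hzx : Fragment z x := hπ.frag_of_frag_proj hzfrag
      have h1 : T z ≤ Text x := hx.1 (Set.mem_insert_iff.2 (Or.inr ⟨z, hzx, hzD, rfl⟩))
      have h2 : T z = ρ (T z) := by
        have := hTatomic π hπ z hzD
        rwa [hzfix] at this
      calc T z = ρ (T z) := h2
      _ ≤ ρ (Text x) := hρ.mono h1
  · intro b hb
    have hb0 : 0 ≤ b := hb (Set.mem_insert _ _)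
    -- for every element s of the set defining Text x, ρ s ≤ ρ b
    have key : ∀ s ∈ insert (0 : F) {w : F | ∃ y : E, Fragment y x ∧ y ∈ D ∧ w = T y},
        ρ s ≤ ρ b := by
      rintro s (rfl | ⟨y, hyfrag, hyD, rfl⟩)
      · rw [map_zero]; exact (hρ.2 b hb0).1
      · have hπyD : π y ∈ D := hD.1 y hyD (π y) (hπ.frag_self y)
        have hπyfrag : Fragment (π y) (π x) := hπ.frag_map hyfrag
        have hTb : T (π y) ≤ b :=
          hb (Set.mem_insert_iff.2 (Or.inr ⟨π y, hπyfrag, hπyD, rfl⟩))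
        have hatom : T (π y) = ρ (T y) := hTatomic π hπ y hyD
        calc ρ (T y) = ρ (ρ (T y)) := (hρ.1 (T y)).symm
        _ = ρ (T (π y)) := by rw [hatom]
        _ ≤ ρ b := hρ.mono hTb
    -- Text x ≤ ρ b + (Text x - ρ (Text x))
    have hub : Text x ≤ ρ b + (Text x - ρ (Text x)) := by
      refine hx.2 ?_
      intro s hs
      have hsle : s ≤ Text x := hx.1 hs
      have h1 : ρ s ≤ ρ b := key s hs
      have h2 : s - ρ s ≤ Text x - ρ (Text x) := by
        have := hσρ.mono hsle
        simpa [LinearMap.sub_apply] using this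
      calc s = ρ s + (s - ρ s) := by abel
      _ ≤ ρ b + (Text x - ρ (Text x)) := add_le_add h1 h2
    have : ρ (Text x) ≤ ρ b := by
      have := sub_le_iff_le_add'.2 hub
      -- Text x - (Text x - ρ (Text x)) = ρ (Text x)
      calc ρ (Text x) = Text x - (Text x - ρ (Text x)) := by abel
      _ ≤ ρ b := by
        rw [sub_le_iff_le_add]
        calc Text x ≤ ρ b + (Text x - ρ (Text x)) := hub
        _ = ρ b + Text x - ρ (Text x) := by abel
        _ = ρ b + (Text x - ρ (Text x)) + ρ (Text x) - ρ (Text x) := by abel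
        _ = ρ b + (Text x - ρ (Text x)) := by abel
    exact this.trans (hρ.2 b hb0).2


end VL
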